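/- Let q ≥ 1 and t ≥ 1, let G be a finite subgroup of U(q), and let λ be the character of a finite-dimensional irreducible complex representation of G. If G is a λ-twisted unitary t-group, then G is a unitary t-group. -/

import Mathlib

open MeasureTheory Matrix

variable (q : ℕ)

noncomputable instance : MeasurableSpace (Matrix.unitaryGroup (Fin q) ℂ) := borel _
instance : BorelSpace (Matrix.unitaryGroup (Fin q) ℂ) := ⟨rfl⟩

instance : IsTopologicalGroup (Matrix.unitaryGroup (Fin q) ℂ) where
  continuous_mul := by
    apply continuous_induced_rng.2
    have h1 : Continuous fun p : Matrix.unitaryGroup (Fin q) ℂ × Matrix.unitaryGroup (Fin q) ℂ =>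
        ((p.1 : Matrix (Fin q) (Fin q) ℂ), (p.2 : Matrix (Fin q) (Fin q) ℂ)) :=
      (continuous_subtype_val.comp continuous_fst).prodMk (continuous_subtype_val.comp continuous_snd)
    exact (continuous_fst.matrix_mul continuous_snd).comp h1
  continuous_inv := by
    apply continuous_induced_rng.2
    have : (fun a : Matrix.unitaryGroup (Fin q) ℂ => ((a⁻¹ : Matrix.unitaryGroup (Fin q) ℂ) : Matrix (Fin q) (Fin q) ℂ))
        = fun a : Matrix.unitaryGroup (Fin q) ℂ => star (a : Matrix (Fin q) (Fin q) ℂ) := by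
      funext a
      rw [← Unitary.star_eq_inv, Unitary.coe_star]
    show Continuous (fun a : Matrix.unitaryGroup (Fin q) ℂ => ((a⁻¹ : Matrix.unitaryGroup (Fin q) ℂ) : Matrix (Fin q) (Fin q) ℂ))
    rw [this]
    exact continuous_subtype_val.star

instance : CompactSpace (Matrix.unitaryGroup (Fin q) ℂ) := by
  apply isCompact_iff_compactSpace.mp
  have hsub : (Matrix.unitaryGroup (Fin q) ℂ : Set (Matrix (Fin q) (Fin q) ℂ)) ⊆
      Set.univ.pi fun _ : Fin q => Set.univ.pi fun _ : Fin q => Metric.closedBall (0 : ℂ) 1 := by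
    intro U hU
    intro i _ 
    intro j _
    simpa [Complex.dist_eq] using entry_norm_bound_of_unitary hU i j
  have hcomp : IsCompact (Set.univ.pi fun _ : Fin q => Set.univ.pi fun _ : Fin q =>
      Metric.closedBall (0 : ℂ) 1) :=
    isCompact_univ_pi fun _ => isCompact_univ_pi fun _ => isCompact_closedBall 0 1
  have hclosed : IsClosed (Matrix.unitaryGroup (Fin q) ℂ : Set (Matrix (Fin q) (Fin q) ℂ)) := by
    have : (Matrix.unitaryGroup (Fin q) ℂ : Set (Matrix (Fin q) (Fin q) ℂ)) =
        (fun U : Matrix (Fin q) (Fin q) ℂ => star U * U) ⁻¹' {1} ∩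
        (fun U : Matrix (Fin q) (Fin q) ℂ => U * star U) ⁻¹' {1} := by
      ext U
      simp [Matrix.mem_unitaryGroup_iff, Unitary.mem_iff, Set.mem_inter_iff]
      try tauto
    rw [this]
    exact ((isClosed_singleton.preimage (continuous_id.star.matrix_mul continuous_id)).inter
      (isClosed_singleton.preimage (continuous_id.matrix_mul continuous_id.star)))
  exact hcomp.of_isClosed_subset hclosed hsub

/-- The unit-normalized Haar measure on the unitary group `U(q)`:
the Haar measure normalized so that the total mass of `U(q)` is `1`. -/
noncomputable def haarU : Measure (Matrix.unitaryGroup (Fin q) ℂ) :=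
  Measure.haarMeasure (⊤ : TopologicalSpace.PositiveCompacts (Matrix.unitaryGroup (Fin q) ℂ))

/-- The `t`-fold Kronecker power `(A ⊗ Ā)^{⊗ t}`, realized as a matrix whose rows and
columns are indexed by `Fin t → Fin q × Fin q`: the entry at `(i, j)` is
`∏ k, A (i k).1 (j k).1 * conj (A (i k).2 (j k).2)`. -/
noncomputable def kronPow (t : ℕ) (A : Matrix (Fin q) (Fin q) ℂ) :
    Matrix (Fin t → Fin q × Fin q) (Fin t → Fin q × Fin q) ℂ :=
  Matrix.of fun i j => ∏ k : Fin t, (A (i k).1 (j k).1 * (starRingEnd ℂ) (A (i k).2 (j k).2))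


lemma kronPow_mul (t : ℕ) (A B : Matrix (Fin q) (Fin q) ℂ) :
    kronPow q t (A * B) = kronPow q t A * kronPow q t B := by
  ext i j
  show (∏ k : Fin t, ((A * B) (i k).1 (j k).1 * (starRingEnd ℂ) ((A * B) (i k).2 (j k).2)))
    = ∑ m : Fin t → Fin q × Fin q,
        (∏ k : Fin t, (A (i k).1 (m k).1 * (starRingEnd ℂ) (A (i k).2 (m k).2))) *
        (∏ k : Fin t, (B (m k).1 (j k).1 * (starRingEnd ℂ) (B (m k).2 (j k).2)))
  have h : ∀ k : Fin t,
      (A * B) (i k).1 (j k).1 * (starRingEnd ℂ) ((A * B) (i k).2 (j k).2)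
      = ∑ p : Fin q × Fin q,
          (A (i k).1 p.1 * (starRingEnd ℂ) (A (i k).2 p.2)) *
          (B p.1 (j k).1 * (starRingEnd ℂ) (B p.2 (j k).2)) := by
    intro k
    rw [Matrix.mul_apply, Matrix.mul_apply, map_sum, Finset.sum_mul_sum,
      Fintype.sum_prod_type]
    refine Finset.sum_congr rfl fun a _ => Finset.sum_congr rfl fun b _ => ?_
    simp only [_root_.map_mul]
    ring
  calc (∏ k : Fin t, ((A * B) (i k).1 (j k).1 * (starRingEnd ℂ) ((A * B) (i k).2 (j k).2)))
      = ∏ k : Fin t, ∑ p : Fin q × Fin q,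
          (A (i k).1 p.1 * (starRingEnd ℂ) (A (i k).2 p.2)) *
          (B p.1 (j k).1 * (starRingEnd ℂ) (B p.2 (j k).2)) :=
        Finset.prod_congr rfl fun k _ => h k
    _ = ∑ m : Fin t → Fin q × Fin q, ∏ k : Fin t,
          (A (i k).1 (m k).1 * (starRingEnd ℂ) (A (i k).2 (m k).2)) *
          (B (m k).1 (j k).1 * (starRingEnd ℂ) (B (m k).2 (j k).2)) := by
        rw [Finset.prod_univ_sum]
        exact Finset.sum_congr (by simp [Fintype.piFinset_univ]) fun m _ => rfl
    _ = _ := Finset.sum_congr rfl fun m _ => Finset.prod_mul_distrib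

/-- Let `q ≥ 1`, `t ≥ 1`, `G` a finite subgroup of `U(q)`, and `lam` the character
of a finite-dimensional irreducible complex representation of `G`. If `G` is a `λ`-twisted
unitary `t`-group, then `G` is a unitary `t`-group. -/
theorem twisted_tGroup_is_tGroup (t : ℕ) (hq : 1 ≤ q) (ht : 1 ≤ t)
    (G : Subgroup (Matrix.unitaryGroup (Fin q) ℂ)) [Fintype G]
    (V : Type*) [AddCommGroup V] [Module ℂ V] [FiniteDimensional ℂ V] [Nontrivial V]
    (ρ : Representation ℂ G V)
    (hirr : ∀ p : Submodule ℂ V, (∀ g : G, ∀ v ∈ p, ρ g v ∈ p) → p = ⊥ ∨ p = ⊤)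
    (lam : G → ℂ) (hlam : ∀ g : G, lam g = LinearMap.trace ℂ V (ρ g))
    (htwisted : (Fintype.card G : ℂ)⁻¹ •
        ∑ g : G, ((‖lam g‖ : ℂ) ^ 2) •
          kronPow q t ((g : Matrix.unitaryGroup (Fin q) ℂ) : Matrix (Fin q) (Fin q) ℂ)
      = Matrix.of fun i j =>
          ∫ U : Matrix.unitaryGroup (Fin q) ℂ,
            kronPow q t ((U : Matrix (Fin q) (Fin q) ℂ)) i j ∂(haarU q)) :
    (Fintype.card G : ℂ)⁻¹ •
        ∑ g : G, kronPow q t ((g : Matrix.unitaryGroup (Fin q) ℂ) : Matrix (Fin q) (Fin q) ℂ)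
      = Matrix.of fun i j =>
          ∫ U : Matrix.unitaryGroup (Fin q) ℂ,
            kronPow q t ((U : Matrix (Fin q) (Fin q) ℂ)) i j ∂(haarU q) := by
  classical
  haveI hprob : IsProbabilityMeasure (haarU q) := by
    constructor
    have h := Measure.haarMeasure_self
      (K₀ := (⊤ : TopologicalSpace.PositiveCompacts (Matrix.unitaryGroup (Fin q) ℂ)))
    rwa [TopologicalSpace.PositiveCompacts.coe_top] at h
  haveI hinvmeas : (haarU q).IsMulLeftInvariant := by unfold haarU; infer_instance
  haveI hopos : (haarU q).IsOpenPosMeasure := by unfold haarU; infer_instance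
  set P : Matrix (Fin t → Fin q × Fin q) (Fin t → Fin q × Fin q) ℂ :=
    Matrix.of fun i j =>
      ∫ U : Matrix.unitaryGroup (Fin q) ℂ,
        kronPow q t ((U : Matrix (Fin q) (Fin q) ℂ)) i j ∂(haarU q) with hPdef
  have hent : ∀ a b : Fin q, Continuous fun U : Matrix.unitaryGroup (Fin q) ℂ =>
      (U : Matrix (Fin q) (Fin q) ℂ) a b := fun a b =>
    (continuous_apply b).comp ((continuous_apply a).comp continuous_subtype_val)
  have hcont : ∀ i j, Continuous fun U : Matrix.unitaryGroup (Fin q) ℂ =>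
      kronPow q t ((U : Matrix (Fin q) (Fin q) ℂ)) i j := by
    intro i j
    show Continuous fun U : Matrix.unitaryGroup (Fin q) ℂ =>
      ∏ k : Fin t, ((U : Matrix (Fin q) (Fin q) ℂ) (i k).1 (j k).1 *
        (starRingEnd ℂ) ((U : Matrix (Fin q) (Fin q) ℂ) (i k).2 (j k).2))
    apply continuous_finset_prod
    intro k _
    exact (hent _ _).mul (hent _ _).star
  have hintg : ∀ i j, Integrable
      (fun U : Matrix.unitaryGroup (Fin q) ℂ =>
        kronPow q t ((U : Matrix (Fin q) (Fin q) ℂ)) i j) (haarU q) :=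
    fun i j => (hcont i j).integrable_of_hasCompactSupport
      (HasCompactSupport.of_compactSpace _)
  have hKmul : ∀ U W : Matrix.unitaryGroup (Fin q) ℂ,
      kronPow q t (((U * W : Matrix.unitaryGroup (Fin q) ℂ) : Matrix (Fin q) (Fin q) ℂ))
        = kronPow q t (U : Matrix (Fin q) (Fin q) ℂ) *
          kronPow q t (W : Matrix (Fin q) (Fin q) ℂ) := by
    intro U W
    have h : ((U * W : Matrix.unitaryGroup (Fin q) ℂ) : Matrix (Fin q) (Fin q) ℂ)
        = (U : Matrix (Fin q) (Fin q) ℂ) * (W : Matrix (Fin q) (Fin q) ℂ) := rfl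
    rw [h, kronPow_mul]
  have hinvP : ∀ g : Matrix.unitaryGroup (Fin q) ℂ,
      kronPow q t (g : Matrix (Fin q) (Fin q) ℂ) * P = P := by
    intro g
    ext i j
    rw [Matrix.mul_apply]
    calc ∑ m, kronPow q t (g : Matrix (Fin q) (Fin q) ℂ) i m * P m j
        = ∑ m, ∫ U, kronPow q t (g : Matrix (Fin q) (Fin q) ℂ) i m *
            kronPow q t ((U : Matrix (Fin q) (Fin q) ℂ)) m j ∂(haarU q) :=
          Finset.sum_congr rfl fun m _ =>
            (MeasureTheory.integral_const_mul _ _).symm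
      _ = ∫ U, ∑ m, kronPow q t (g : Matrix (Fin q) (Fin q) ℂ) i m *
            kronPow q t ((U : Matrix (Fin q) (Fin q) ℂ)) m j ∂(haarU q) :=
          (MeasureTheory.integral_finset_sum _ fun m _ =>
            (hintg m j).const_mul _).symm
      _ = ∫ U, kronPow q t (((g * U : Matrix.unitaryGroup (Fin q) ℂ) :
            Matrix (Fin q) (Fin q) ℂ)) i j ∂(haarU q) := by
          refine MeasureTheory.integral_congr_ae (Filter.Eventually.of_forall fun U => ?_)
          simp only [hKmul, Matrix.mul_apply]
      _ = ∫ U, kronPow q t ((U : Matrix (Fin q) (Fin q) ℂ)) i j ∂(haarU q) :=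
          MeasureTheory.integral_mul_left_eq_self
            (fun U : Matrix.unitaryGroup (Fin q) ℂ =>
              kronPow q t ((U : Matrix (Fin q) (Fin q) ℂ)) i j) g
      _ = P i j := rfl
  have hPP : P * P = P := by
    ext i j
    rw [Matrix.mul_apply]
    calc ∑ m, P i m * P m j
        = ∑ m, ∫ U, kronPow q t ((U : Matrix (Fin q) (Fin q) ℂ)) i m * P m j ∂(haarU q) :=
          Finset.sum_congr rfl fun m _ => (MeasureTheory.integral_mul_const _ _).symm
      _ = ∫ U, ∑ m, kronPow q t ((U : Matrix (Fin q) (Fin q) ℂ)) i m * P m j ∂(haarU q) :=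
          (MeasureTheory.integral_finset_sum _ fun m _ => (hintg i m).mul_const _).symm
      _ = ∫ U, (kronPow q t ((U : Matrix (Fin q) (Fin q) ℂ)) * P) i j ∂(haarU q) := by
          refine MeasureTheory.integral_congr_ae (Filter.Eventually.of_forall fun U => ?_)
          simp only [Matrix.mul_apply]
      _ = ∫ _U, P i j ∂(haarU q) := by
          refine MeasureTheory.integral_congr_ae (Filter.Eventually.of_forall fun U => ?_)
          simp only [hinvP U]
      _ = P i j := by simp
  have hncard : ((Fintype.card G : ℂ)) ≠ 0 :=
    Nat.cast_ne_zero.mpr Fintype.card_ne_zero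
  have hsumP : (∑ g : G, kronPow q t
        ((g : Matrix.unitaryGroup (Fin q) ℂ) : Matrix (Fin q) (Fin q) ℂ)) * P
      = (Fintype.card G : ℂ) • P := by
    rw [Finset.sum_mul]
    calc ∑ g : G, kronPow q t
          ((g : Matrix.unitaryGroup (Fin q) ℂ) : Matrix (Fin q) (Fin q) ℂ) * P
        = ∑ _g : G, P := Finset.sum_congr rfl fun g _ => hinvP _
      _ = (Fintype.card G : ℂ) • P := by
          rw [Finset.sum_const, Finset.card_univ, Nat.cast_smul_eq_nsmul]
  have hsumK : ∀ h : G, (∑ g : G, kronPow q t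
        ((g : Matrix.unitaryGroup (Fin q) ℂ) : Matrix (Fin q) (Fin q) ℂ)) *
        kronPow q t ((h : Matrix.unitaryGroup (Fin q) ℂ) : Matrix (Fin q) (Fin q) ℂ)
      = ∑ g : G, kronPow q t
        ((g : Matrix.unitaryGroup (Fin q) ℂ) : Matrix (Fin q) (Fin q) ℂ) := by
    intro h
    rw [Finset.sum_mul]
    calc ∑ g : G, kronPow q t ((g : Matrix.unitaryGroup (Fin q) ℂ) : Matrix (Fin q) (Fin q) ℂ) *
          kronPow q t ((h : Matrix.unitaryGroup (Fin q) ℂ) : Matrix (Fin q) (Fin q) ℂ)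
        = ∑ g : G, kronPow q t
            (((g * h : G) : Matrix.unitaryGroup (Fin q) ℂ) : Matrix (Fin q) (Fin q) ℂ) := by
          refine Finset.sum_congr rfl fun g _ => ?_
          have h1 : ((g * h : G) : Matrix.unitaryGroup (Fin q) ℂ)
              = (g : Matrix.unitaryGroup (Fin q) ℂ) * (h : Matrix.unitaryGroup (Fin q) ℂ) := rfl
          rw [h1, hKmul]
      _ = ∑ g : G, kronPow q t
            ((g : Matrix.unitaryGroup (Fin q) ℂ) : Matrix (Fin q) (Fin q) ℂ) :=
          Fintype.sum_equiv (Equiv.mulRight h) _ _ fun g => rfl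
  set S : Matrix (Fin t → Fin q × Fin q) (Fin t → Fin q × Fin q) ℂ :=
    (Fintype.card G : ℂ)⁻¹ • ∑ g : G, kronPow q t
      ((g : Matrix.unitaryGroup (Fin q) ℂ) : Matrix (Fin q) (Fin q) ℂ) with hSdef
  have hSP : S * P = P := by
    rw [hSdef, Matrix.smul_mul, hsumP, smul_smul, inv_mul_cancel₀ hncard, one_smul]
  set c : ℂ := (Fintype.card G : ℂ)⁻¹ * ∑ h : G, ((‖lam h‖ : ℂ) ^ 2) with hcdef
  have hST : S * ((Fintype.card G : ℂ)⁻¹ •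
      ∑ h : G, ((‖lam h‖ : ℂ) ^ 2) • kronPow q t
        ((h : Matrix.unitaryGroup (Fin q) ℂ) : Matrix (Fin q) (Fin q) ℂ)) = c • S := by
    rw [Matrix.mul_smul, Matrix.mul_sum]
    have h1 : ∀ h : G, S * (((‖lam h‖ : ℂ) ^ 2) • kronPow q t
        ((h : Matrix.unitaryGroup (Fin q) ℂ) : Matrix (Fin q) (Fin q) ℂ))
        = ((‖lam h‖ : ℂ) ^ 2) • S := by
      intro h
      rw [Matrix.mul_smul, hSdef, Matrix.smul_mul, hsumK h]
    rw [Finset.sum_congr rfl fun h _ => h1 h, ← Finset.sum_smul, smul_smul, hcdef]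
  rw [htwisted] at hST
  have hPcS : P = c • S := hSP.symm.trans hST
  have hPcP : P = c • P := by
    calc P = P * P := hPP.symm
      _ = (c • S) * P := by rw [← hPcS]
      _ = c • (S * P) := Matrix.smul_mul c S P
      _ = c • P := by rw [hSP]
  -- a nonvanishing entry of P
  have hq0 : (0 : ℕ) < q := hq
  set z : Fin q := ⟨0, hq0⟩ with hz
  set e : Fin t → Fin q × Fin q := fun _ => (z, z) with he
  have hKe : ∀ U : Matrix.unitaryGroup (Fin q) ℂ,
      kronPow q t ((U : Matrix (Fin q) (Fin q) ℂ)) e e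
        = ((Complex.normSq ((U : Matrix (Fin q) (Fin q) ℂ) z z) ^ t : ℝ) : ℂ) := by
    intro U
    show (∏ _k : Fin t, ((U : Matrix (Fin q) (Fin q) ℂ) z z *
        (starRingEnd ℂ) ((U : Matrix (Fin q) (Fin q) ℂ) z z))) = _
    rw [Finset.prod_const, Complex.mul_conj, Finset.card_univ, Fintype.card_fin,
      Complex.ofReal_pow]
  have hintR : Integrable (fun U : Matrix.unitaryGroup (Fin q) ℂ =>
      Complex.normSq ((U : Matrix (Fin q) (Fin q) ℂ) z z) ^ t) (haarU q) := by
    refine Continuous.integrable_of_hasCompactSupport ?_ (HasCompactSupport.of_compactSpace _)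
    exact (Complex.continuous_normSq.comp (hent z z)).pow t
  have hposR : 0 < ∫ U : Matrix.unitaryGroup (Fin q) ℂ,
      Complex.normSq ((U : Matrix (Fin q) (Fin q) ℂ) z z) ^ t ∂(haarU q) := by
    refine (MeasureTheory.integral_pos_iff_support_of_nonneg
      (fun U => pow_nonneg (Complex.normSq_nonneg _) t) hintR).mpr ?_
    have hopen : IsOpen {U : Matrix.unitaryGroup (Fin q) ℂ |
        0 < Complex.normSq ((U : Matrix (Fin q) (Fin q) ℂ) z z) ^ t} :=
      isOpen_lt continuous_const ((Complex.continuous_normSq.comp (hent z z)).pow t)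
    have hone : (1 : Matrix.unitaryGroup (Fin q) ℂ) ∈ {U : Matrix.unitaryGroup (Fin q) ℂ |
        0 < Complex.normSq ((U : Matrix (Fin q) (Fin q) ℂ) z z) ^ t} := by
      have h1 : ((1 : Matrix.unitaryGroup (Fin q) ℂ) : Matrix (Fin q) (Fin q) ℂ) z z = 1 := by
        simp [Matrix.one_apply_eq]
      simp [Set.mem_setOf_eq, h1]
    calc (0 : ENNReal) < haarU q {U : Matrix.unitaryGroup (Fin q) ℂ |
          0 < Complex.normSq ((U : Matrix (Fin q) (Fin q) ℂ) z z) ^ t} :=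
          hopen.measure_pos _ ⟨1, hone⟩
      _ ≤ haarU q (Function.support fun U : Matrix.unitaryGroup (Fin q) ℂ =>
          Complex.normSq ((U : Matrix (Fin q) (Fin q) ℂ) z z) ^ t) :=
          measure_mono fun U hU => ne_of_gt hU
  have hPe : P e e = ((∫ U : Matrix.unitaryGroup (Fin q) ℂ,
      Complex.normSq ((U : Matrix (Fin q) (Fin q) ℂ) z z) ^ t ∂(haarU q) : ℝ) : ℂ) := by
    have h0 : P e e = ∫ U : Matrix.unitaryGroup (Fin q) ℂ,
        kronPow q t ((U : Matrix (Fin q) (Fin q) ℂ)) e e ∂(haarU q) := rfl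
    rw [h0, MeasureTheory.integral_congr_ae (Filter.Eventually.of_forall hKe)]
    exact integral_ofReal
  have hPe0 : P e e ≠ 0 := by
    rw [hPe]
    exact_mod_cast Complex.ofReal_ne_zero.mpr hposR.ne'
  have hc1 : c = 1 := by
    have h2 := congrArg (fun M : Matrix (Fin t → Fin q × Fin q)
      (Fin t → Fin q × Fin q) ℂ => M e e) hPcP
    simp only [Matrix.smul_apply, smul_eq_mul] at h2
    have h3 : c * P e e = 1 * P e e := by rw [one_mul, ← h2]
    exact mul_right_cancel₀ hPe0 h3
  rw [hPcS, hc1, one_smul]
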